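/- For every N ∈ ℕ, every m ∈ ℕ, and all permutations σ, π of Fin m, the cut-and-join operator depends only on the conjugacy class (Young diagram) of the permutation: W_N(π ∘ σ ∘ π⁻¹) = W_N(σ) as ℂ-linear operators on R. Equivalently, if σ and τ are conjugate permutations of Fin m, then W_N(σ) = W_N(τ). -/

import Mathlib

open MvPolynomial

noncomputable abbrev R : Type := MvPolynomial (ℕ × ℕ) ℂ

/-- The `gl(∞)` generator `D_N(a,b) p = ∑_{e<N} X_{(a,e)} ∂p/∂X_{(b,e)}`. -/
noncomputable def Dop (N a b : ℕ) : R →ₗ[ℂ] R :=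
  ∑ e ∈ Finset.range N,
    (LinearMap.mulLeft ℂ (X (a, e))) ∘ₗ (pderiv ((b, e) : ℕ × ℕ)).toLinearMap

/-- The normally ordered operator `V_N(a|b)`. -/
noncomputable def Vop (N : ℕ) {m : ℕ} (a b : Fin m → ℕ) : R →ₗ[ℂ] R :=
  ∑ e : Fin m → Fin N,
    (LinearMap.mulLeft ℂ (∏ i, X (a i, (e i : ℕ)))) ∘ₗ
      (List.ofFn fun i => (pderiv ((b i, (e i : ℕ)) : ℕ × ℕ)).toLinearMap).prod

/-- The cut-and-join operator `W_N(σ) = ∑_a V_N(a | a∘σ)`. -/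
noncomputable def Wop (N : ℕ) {m : ℕ} (σ : Equiv.Perm (Fin m)) : R →ₗ[ℂ] R :=
  ∑ a : Fin m → Fin N, Vop N (fun i => (a i : ℕ)) (fun i => (a (σ i) : ℕ))

/-- Compatibility of index tuples with a two-fold graph. -/
def Compatible {N m : ℕ} (α β : Fin m → ℕ) (a b : Fin m → Fin N) : Prop :=
  (∀ i j, a i = a j ↔ α i = α j) ∧ (∀ i j, b i = b j ↔ β i = β j)

instance {N m : ℕ} (α β : Fin m → ℕ) (a b : Fin m → Fin N) :
    Decidable (Compatible α β a b) :=
  inferInstanceAs (Decidable (_ ∧ _))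

/-- The unnormalized graph operator `Ṽ_N(α,β)`. -/
noncomputable def Vt (N : ℕ) {m : ℕ} (α β : Fin m → ℕ) : R →ₗ[ℂ] R :=
  ∑ p ∈ Finset.univ.filter
      (fun p : (Fin m → Fin N) × (Fin m → Fin N) => Compatible α β p.1 p.2),
    Vop N (fun i => (p.1 i : ℕ)) (fun i => (p.2 i : ℕ))

/-- the cut-and-join operator `W_N(σ)` depends only on the conjugacy class
(Young diagram) of `σ`. -/
lemma my_pderiv_comm (i j : ℕ × ℕ) (p : R) :
    pderiv i (pderiv j p) = pderiv j (pderiv i p) := by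
  induction p using MvPolynomial.induction_on' with
  | monomial s a =>
    by_cases h : i = j
    · subst h; rfl
    · simp only [pderiv_monomial, Finsupp.tsub_apply, Finsupp.single_apply,
        if_neg h, if_neg (Ne.symm h), Nat.sub_zero, tsub_right_comm]
      ring_nf
  | add p q hp hq => simp [map_add, hp, hq]

lemma pderiv_commute (i j : ℕ × ℕ) :
    Commute ((pderiv i).toLinearMap : R →ₗ[ℂ] R) (pderiv j).toLinearMap := by
  apply LinearMap.ext
  intro p
  simpa [Module.End.mul_apply] using my_pderiv_comm i j p

lemma pairwise_all {α : Type*} {r : α → α → Prop} (h : ∀ a b, r a b) (l : List α) :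
    l.Pairwise r := by
  induction l with
  | nil => simp
  | cons a l ih => exact List.Pairwise.cons (fun b _ => h a b) ih

lemma list_prod_comp_perm {m : ℕ} (g : Fin m → (R →ₗ[ℂ] R))
    (hg : ∀ i j, Commute (g i) (g j)) (τ : Equiv.Perm (Fin m)) :
    (List.ofFn fun i => g (τ i)).prod = (List.ofFn g).prod := by
  have hperm : List.Perm ((List.finRange m).map τ) (List.finRange m) :=
    List.perm_of_nodup_nodup_toFinset_eq
      ((List.nodup_finRange m).map τ.injective) (List.nodup_finRange m)
      (by ext x; simpa [List.mem_toFinset] using ⟨τ.symm x, by simp⟩)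
  have h2 : List.Perm (List.ofFn fun i => g (τ i)) (List.ofFn g) := by
    rw [List.ofFn_eq_map, List.ofFn_eq_map,
      show ((fun i => g (τ i)) : Fin m → _) = g ∘ τ from rfl, ← List.map_map]
    exact hperm.map g
  refine h2.prod_eq' ?_
  rw [List.ofFn_eq_map]
  exact (pairwise_all (fun a b => hg (τ a) (τ b)) (List.finRange m)).map _ (fun {a b} h => h)

set_option maxHeartbeats 1000000 in
lemma Vop_comp_perm (N : ℕ) {m : ℕ} (a b : Fin m → ℕ) (τ : Equiv.Perm (Fin m)) :
    Vop N (fun i => a (τ i)) (fun i => b (τ i)) = Vop N a b := by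
  unfold Vop
  refine Fintype.sum_equiv (Equiv.arrowCongr τ (Equiv.refl (Fin N))) _ _ (fun e => ?_)
  have h1 : (∏ i, (X ((a (τ i), (e i : ℕ))) : R)) =
      ∏ i, X ((a i, ((Equiv.arrowCongr τ (Equiv.refl (Fin N)) e) i : ℕ))) := by
    rw [← Equiv.prod_comp τ (fun i => (X ((a i, ((Equiv.arrowCongr τ (Equiv.refl (Fin N)) e) i : ℕ))) : R))]
    refine Finset.prod_congr rfl (fun i _ => ?_)
    simp [Equiv.arrowCongr]
  have h2 : (List.ofFn fun i => ((pderiv ((b (τ i), (e i : ℕ)) : ℕ × ℕ)).toLinearMap : R →ₗ[ℂ] R)).prod =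
      (List.ofFn fun i =>
        ((pderiv ((b i, ((Equiv.arrowCongr τ (Equiv.refl (Fin N)) e) i : ℕ)) : ℕ × ℕ)).toLinearMap : R →ₗ[ℂ] R)).prod := by
    have hfun : (fun i => ((pderiv ((b (τ i), (e i : ℕ)) : ℕ × ℕ)).toLinearMap : R →ₗ[ℂ] R))
        = fun i => ((pderiv ((b (τ i), ((Equiv.arrowCongr τ (Equiv.refl (Fin N)) e) (τ i) : ℕ)) : ℕ × ℕ)).toLinearMap : R →ₗ[ℂ] R) := by
      funext i; simp [Equiv.arrowCongr]
    exact (congrArg (fun f : Fin m → (R →ₗ[ℂ] R) => (List.ofFn f).prod) hfun).trans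
      (list_prod_comp_perm
        (fun i => ((pderiv ((b i, ((Equiv.arrowCongr τ (Equiv.refl (Fin N)) e) i : ℕ)) : ℕ × ℕ)).toLinearMap : R →ₗ[ℂ] R))
        (fun i j => pderiv_commute _ _) τ)
  rw [h1, h2]

theorem Wop_conj_invariant (N m : ℕ) (σ π : Equiv.Perm (Fin m)) :
    Wop N (π * σ * π⁻¹) = Wop N σ := by
  unfold Wop
  refine Fintype.sum_equiv (Equiv.arrowCongr π (Equiv.refl (Fin N))).symm _ _ (fun a => ?_)
  have : ((Equiv.arrowCongr π (Equiv.refl (Fin N))).symm a : Fin m → Fin N) = fun i => a (π i) := by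
    funext i; simp [Equiv.arrowCongr]
  rw [this]
  have := Vop_comp_perm N (fun i => ((a (π i) : ℕ))) (fun i => ((a (π (σ i)) : ℕ))) π⁻¹
  simp only [Equiv.Perm.inv_def, Equiv.apply_symm_apply] at this
  rw [← this]
  rfl
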